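/- Let T > 0 and define R(s,t) := ½(s^{1/3} + t^{1/3} − |t−s|^{1/3}) for s,t ≥ 0. Then lim_{ε→0⁺} ε^{−4/3} ∫_0^T ∫_0^T (R(t+ε, s+ε) − R(t, s+ε) − R(t+ε, s) + R(t,s)) ds dt = 0; indeed this planar-increment double integral is nonnegative and bounded above by 2(ε²(T+ε)^{1/3} + ε^{2+1/3}). -/

import Mathlib

open Set MeasureTheory Filter Topology intervalIntegral

/-- Covariance function of fractional Brownian motion with Hurst parameter `H = 1/6`. -/
noncomputable def fbmCovSixth (s t : ℝ) : ℝ :=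
  (s ^ ((1:ℝ)/3) + t ^ ((1:ℝ)/3) - |t - s| ^ ((1:ℝ)/3)) / 2


lemma hasDerivAt_mul_abs_rpow (p : ℝ) (hp : 0 < p) (x : ℝ) :
    HasDerivAt (fun y : ℝ => y * |y| ^ p) ((p + 1) * |x| ^ p) x := by
  rcases lt_trichotomy x 0 with hx | rfl | hx
  · have h : HasDerivAt (fun y : ℝ => -((-y) ^ (p + 1))) ((p + 1) * |x| ^ p) x := by
      have h1 : HasDerivAt (fun y : ℝ => (-y) ^ (p + 1)) ((p + 1) * (-x) ^ p * (-1)) x := by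
        have h2 := Real.hasDerivAt_rpow_const (x := -x) (p := p + 1)
          (Or.inl (by simpa using hx.ne))
        have h3 : HasDerivAt (fun y : ℝ => -y) (-1 : ℝ) x := (hasDerivAt_id x).neg
        simpa [add_sub_cancel_right, Function.comp_def] using h2.comp x h3
      have := h1.fun_neg
      refine this.congr_deriv ?_
      rw [abs_of_neg hx]; ring
    apply h.congr_of_eventuallyEq
    filter_upwards [eventually_lt_nhds hx] with y hy
    rw [abs_of_neg hy, Real.rpow_add' (by linarith) (by positivity), Real.rpow_one]
    ring
  · have h0 : |(0:ℝ)| ^ p = 0 := by simp [Real.zero_rpow hp.ne']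
    rw [h0, mul_zero]
    rw [hasDerivAt_iff_tendsto_slope]
    have hc : Tendsto (fun y : ℝ => |y| ^ p) (𝓝[≠] 0) (𝓝 0) := by
      have : ContinuousAt (fun y : ℝ => |y| ^ p) 0 := by
        apply ContinuousAt.rpow_const (continuous_abs.continuousAt)
        exact Or.inr hp.le
      have ht := this.tendsto.mono_left (nhdsWithin_le_nhds (s := {(0:ℝ)}ᶜ))
      simpa [Real.zero_rpow hp.ne'] using ht
    apply hc.congr'
    filter_upwards [self_mem_nhdsWithin] with y hy
    have : (y : ℝ) ≠ 0 := hy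
    rw [slope_def_field]; field_simp; simp
  · have h : HasDerivAt (fun y : ℝ => y ^ (p + 1)) ((p + 1) * |x| ^ p) x := by
      have h2 := Real.hasDerivAt_rpow_const (x := x) (p := p + 1) (Or.inl hx.ne')
      simpa [add_sub_cancel_right, abs_of_pos hx] using h2
    apply h.congr_of_eventuallyEq
    filter_upwards [eventually_gt_nhds hx] with y hy
    rw [abs_of_pos hy, Real.rpow_add' (by linarith) (by positivity), Real.rpow_one]
    ring

noncomputable def aux1 (x : ℝ) : ℝ := 3/4 * (x * |x| ^ ((1:ℝ)/3))
noncomputable def aux2 (x : ℝ) : ℝ := 9/28 * (x * (x * |x| ^ ((1:ℝ)/3)))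

lemma hasDerivAt_aux1 (x : ℝ) : HasDerivAt aux1 (|x| ^ ((1:ℝ)/3)) x := by
  have h := (hasDerivAt_mul_abs_rpow ((1:ℝ)/3) (by norm_num) x).const_mul (3/4 : ℝ)
  have e : (3/4 : ℝ) * ((1/3 + 1) * |x| ^ ((1:ℝ)/3)) = |x| ^ ((1:ℝ)/3) := by ring
  rw [e] at h
  exact h

lemma hasDerivAt_aux2 (x : ℝ) : HasDerivAt aux2 (aux1 x) x := by
  have h1 := hasDerivAt_mul_abs_rpow ((1:ℝ)/3) (by norm_num) x
  have h := ((hasDerivAt_id x).mul h1).const_mul (9/28 : ℝ)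
  simp only [id_eq] at h
  have e : (9/28 : ℝ) * (1 * (x * |x| ^ ((1:ℝ)/3)) + x * ((1/3 + 1) * |x| ^ ((1:ℝ)/3)))
      = aux1 x := by unfold aux1; ring
  rw [e] at h
  exact h

lemma aux2_neg (x : ℝ) : aux2 (-x) = aux2 x := by unfold aux2; rw [abs_neg]; ring

lemma aux2_zero : aux2 0 = 0 := by simp [aux2]

lemma cont13 : Continuous (fun x : ℝ => |x| ^ ((1:ℝ)/3)) :=
  continuous_abs.rpow_const (fun _ => Or.inr (by norm_num))

lemma integrand_eq (t s ε : ℝ) :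
    fbmCovSixth (t + ε) (s + ε) - fbmCovSixth t (s + ε)
      - fbmCovSixth (t + ε) s + fbmCovSixth t s
    = (|t + ε - s| ^ ((1:ℝ)/3) + |t - ε - s| ^ ((1:ℝ)/3) - 2 * |t - s| ^ ((1:ℝ)/3)) / 2 := by
  unfold fbmCovSixth
  rw [show s + ε - (t + ε) = -(t - s) by ring, show s + ε - t = -(t - ε - s) by ring,
    show s - (t + ε) = -(t + ε - s) by ring, show s - t = -(t - s) by ring,
    abs_neg, abs_neg, abs_neg]
  ring

lemma inner_int (T a : ℝ) :
    ∫ s in (0:ℝ)..T, |a - s| ^ ((1:ℝ)/3) = aux1 a - aux1 (a - T) := by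
  rw [intervalIntegral.integral_eq_sub_of_hasDerivAt
    (f := fun s => -aux1 (a - s)) (f' := fun s => |a - s| ^ ((1:ℝ)/3))
    (a := 0) (b := T) ?_ ?_]
  · simp; ring
  · intro s _
    have h := ((hasDerivAt_aux1 (a - s)).comp s ((hasDerivAt_id s).const_sub a)).fun_neg
    simpa [Function.comp_def] using h
  · exact (cont13.comp (continuous_const.sub continuous_id)).intervalIntegrable _ _

lemma cont_aux1 : Continuous aux1 := continuous_const.mul (continuous_id.mul cont13)

lemma double_int (T ε : ℝ) :
    (∫ t in (0:ℝ)..T, ∫ s in (0:ℝ)..T,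
      (fbmCovSixth (t + ε) (s + ε) - fbmCovSixth t (s + ε)
        - fbmCovSixth (t + ε) s + fbmCovSixth t s))
    = aux2 (T + ε) + aux2 (T - ε) - 2 * aux2 T - 2 * aux2 ε := by
  have hin : ∀ t : ℝ, (∫ s in (0:ℝ)..T,
      (fbmCovSixth (t + ε) (s + ε) - fbmCovSixth t (s + ε)
        - fbmCovSixth (t + ε) s + fbmCovSixth t s)) =
      ((aux1 (t + ε) - aux1 (t + ε - T)) + (aux1 (t - ε) - aux1 (t - ε - T))
        - 2 * (aux1 t - aux1 (t - T))) / 2 := by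
    intro t
    have iA : IntervalIntegrable (fun s => |t + ε - s| ^ ((1:ℝ)/3)) volume 0 T :=
      (cont13.comp (continuous_const.sub continuous_id)).intervalIntegrable _ _
    have iB : IntervalIntegrable (fun s => |t - ε - s| ^ ((1:ℝ)/3)) volume 0 T :=
      (cont13.comp (continuous_const.sub continuous_id)).intervalIntegrable _ _
    have iC : IntervalIntegrable (fun s => |t - s| ^ ((1:ℝ)/3)) volume 0 T :=
      (cont13.comp (continuous_const.sub continuous_id)).intervalIntegrable _ _
    simp only [integrand_eq]
    rw [intervalIntegral.integral_div,
      intervalIntegral.integral_sub (iA.add iB) (iC.const_mul 2),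
      intervalIntegral.integral_add iA iB,
      intervalIntegral.integral_const_mul, inner_int, inner_int, inner_int]
  simp only [hin]
  have d1 : ∀ t : ℝ, HasDerivAt (fun t => aux2 (t + ε)) (aux1 (t + ε)) t := fun t => by
    simpa [Function.comp_def] using (hasDerivAt_aux2 (t + ε)).comp t ((hasDerivAt_id t).add_const ε)
  have d2 : ∀ t : ℝ, HasDerivAt (fun t => aux2 (t + ε - T)) (aux1 (t + ε - T)) t := fun t => by
    simpa [Function.comp_def] using (hasDerivAt_aux2 (t + ε - T)).comp t
      (((hasDerivAt_id t).add_const ε).sub_const T)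
  have d3 : ∀ t : ℝ, HasDerivAt (fun t => aux2 (t - ε)) (aux1 (t - ε)) t := fun t => by
    simpa [Function.comp_def] using (hasDerivAt_aux2 (t - ε)).comp t ((hasDerivAt_id t).sub_const ε)
  have d4 : ∀ t : ℝ, HasDerivAt (fun t => aux2 (t - ε - T)) (aux1 (t - ε - T)) t := fun t => by
    simpa [Function.comp_def] using (hasDerivAt_aux2 (t - ε - T)).comp t
      (((hasDerivAt_id t).sub_const ε).sub_const T)
  have d6 : ∀ t : ℝ, HasDerivAt (fun t => aux2 (t - T)) (aux1 (t - T)) t := fun t => by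
    simpa [Function.comp_def] using (hasDerivAt_aux2 (t - T)).comp t ((hasDerivAt_id t).sub_const T)
  rw [intervalIntegral.integral_eq_sub_of_hasDerivAt
    (f := fun t => ((aux2 (t + ε) - aux2 (t + ε - T)) + (aux2 (t - ε) - aux2 (t - ε - T))
        - 2 * (aux2 t - aux2 (t - T))) / 2) ?_ ?_]
  · rw [show T + ε - T = ε by ring, show T - ε - T = -ε by ring,
      show T - T = (0:ℝ) by ring, show (0:ℝ) + ε = ε by ring,
      show ε - T = -(T - ε) by ring, show (0:ℝ) - ε = -ε by ring,
      show -ε - T = -(T + ε) by ring, show (0:ℝ) - T = -T by ring,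
      aux2_neg, aux2_neg, aux2_neg, aux2_neg, aux2_zero]
    ring
  · intro t _
    exact ((((d1 t).sub (d2 t)).add ((d3 t).sub (d4 t))).sub
      (((hasDerivAt_aux2 t).sub (d6 t)).const_mul 2)).div_const 2
  · apply Continuous.intervalIntegrable
    refine Continuous.div_const ?_ 2
    refine Continuous.sub (Continuous.add ?_ ?_) (continuous_const.mul ?_)
    · exact (cont_aux1.comp (continuous_id.add continuous_const)).sub
        (cont_aux1.comp ((continuous_id.add continuous_const).sub continuous_const))
    · exact (cont_aux1.comp (continuous_id.sub continuous_const)).sub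
        (cont_aux1.comp ((continuous_id.sub continuous_const).sub continuous_const))
    · exact cont_aux1.sub (cont_aux1.comp (continuous_id.sub continuous_const))


lemma rpow_superadd {x y p : ℝ} (hx : 0 ≤ x) (hy : 0 ≤ y) (hp : 1 ≤ p) :
    x ^ p + y ^ p ≤ (x + y) ^ p := by
  have hp0 : p ≠ 0 := by linarith
  have key : ∀ z : ℝ, 0 ≤ z → z ≤ x + y → z ^ p ≤ z * (x + y) ^ (p - 1) := by
    intro z hz hzxy
    calc z ^ p = z ^ (1 + (p - 1)) := by rw [show (1:ℝ) + (p - 1) = p by ring]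
      _ = z * z ^ (p - 1) := by rw [Real.rpow_add' hz (by simpa using hp0), Real.rpow_one]
      _ ≤ z * (x + y) ^ (p - 1) :=
          mul_le_mul_of_nonneg_left (Real.rpow_le_rpow hz hzxy (by linarith)) hz
  have e : (x + y) ^ p = (x + y) * (x + y) ^ (p - 1) := by
    rw [show p = 1 + (p - 1) by ring, Real.rpow_add' (by linarith) (by simpa using hp0),
      Real.rpow_one]
    congr 1
    ring_nf
  have h1 := key x hx (by linarith)
  have h2 := key y hy (by linarith)
  have e2 : x * (x + y) ^ (p - 1) + y * (x + y) ^ (p - 1) = (x + y) * (x + y) ^ (p - 1) := by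
    ring
  linarith

lemma mvt_upper {p : ℝ} (hp : 1 ≤ p) {a b : ℝ} (ha : 0 ≤ a) (hab : a ≤ b) :
    b ^ p - a ^ p ≤ (b - a) * (p * b ^ (p - 1)) := by
  rcases eq_or_lt_of_le hab with rfl | h
  · simp
  · have hcont : ContinuousOn (fun x : ℝ => x ^ p) (Icc a b) :=
      (continuous_id.rpow_const (fun x => Or.inr (by linarith))).continuousOn
    obtain ⟨c, hc, hceq⟩ := exists_hasDerivAt_eq_slope (fun x => x ^ p)
      (fun x => p * x ^ (p - 1)) h hcont
      (fun x _ => Real.hasDerivAt_rpow_const (Or.inr hp))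
    have hcb : c ^ (p - 1) ≤ b ^ (p - 1) :=
      Real.rpow_le_rpow (by linarith [hc.1]) hc.2.le (by linarith)
    have heq : b ^ p - a ^ p = (b - a) * (p * c ^ (p - 1)) := by
      rw [hceq, mul_div_assoc', mul_comm, mul_div_assoc, div_self (by linarith : b - a ≠ 0), mul_one]
    rw [heq]
    apply mul_le_mul_of_nonneg_left _ (by linarith)
    exact mul_le_mul_of_nonneg_left hcb (by linarith)

lemma mvt_lower {p : ℝ} (hp : 1 ≤ p) {a b : ℝ} (ha : 0 ≤ a) (hab : a ≤ b) :
    (b - a) * (p * a ^ (p - 1)) ≤ b ^ p - a ^ p := by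
  rcases eq_or_lt_of_le hab with rfl | h
  · simp
  · have hcont : ContinuousOn (fun x : ℝ => x ^ p) (Icc a b) :=
      (continuous_id.rpow_const (fun x => Or.inr (by linarith))).continuousOn
    obtain ⟨c, hc, hceq⟩ := exists_hasDerivAt_eq_slope (fun x => x ^ p)
      (fun x => p * x ^ (p - 1)) h hcont
      (fun x _ => Real.hasDerivAt_rpow_const (Or.inr hp))
    have hca : a ^ (p - 1) ≤ c ^ (p - 1) :=
      Real.rpow_le_rpow ha hc.1.le (by linarith)
    have heq : b ^ p - a ^ p = (b - a) * (p * c ^ (p - 1)) := by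
      rw [hceq, mul_div_assoc', mul_comm, mul_div_assoc, div_self (by linarith : b - a ≠ 0), mul_one]
    rw [heq]
    apply mul_le_mul_of_nonneg_left _ (by linarith)
    exact mul_le_mul_of_nonneg_left hca (by linarith)




lemma aux2_eq_rpow {x : ℝ} (hx : 0 ≤ x) : aux2 x = 9/28 * x ^ ((7:ℝ)/3) := by
  rcases eq_or_lt_of_le hx with rfl | hx
  · simp [aux2, Real.zero_rpow (by norm_num : ((7:ℝ)/3) ≠ 0)]
  · unfold aux2
    rw [abs_of_pos hx, show (7:ℝ)/3 = 1 + (1 + 1/3) by norm_num, Real.rpow_add hx,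
      Real.rpow_add hx, Real.rpow_one]

lemma aux2_sq (x : ℝ) : aux2 x = 9/28 * (x ^ 2) ^ ((7:ℝ)/6) := by
  rcases eq_or_ne x 0 with rfl | hx
  · simp [aux2, Real.zero_rpow (by norm_num : ((7:ℝ)/6) ≠ 0)]
  · have h1 : (0:ℝ) < |x| := abs_pos.mpr hx
    have h2 : ((x ^ 2 : ℝ)) ^ ((7:ℝ)/6) = |x| ^ ((7:ℝ)/3) := by
      rw [← sq_abs, ← Real.rpow_two, ← Real.rpow_mul (abs_nonneg x)]
      norm_num
    rw [h2, show (7:ℝ)/3 = 1 + (1 + 1/3) by norm_num, Real.rpow_add h1,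
      Real.rpow_add h1, Real.rpow_one]
    unfold aux2
    rw [show x * (x * |x| ^ ((1:ℝ)/3)) = (x * x) * |x| ^ ((1:ℝ)/3) by ring,
      ← abs_mul_abs_self x]
    ring

lemma aux2_nonneg {x : ℝ} (hx : 0 ≤ x) : 0 ≤ aux2 x := by
  unfold aux2
  have := Real.rpow_nonneg (abs_nonneg x) ((1:ℝ)/3)
  positivity

lemma main_bounds (T ε : ℝ) (hT : 0 < T) (hε : 0 < ε) :
    0 ≤ aux2 (T + ε) + aux2 (T - ε) - 2 * aux2 T - 2 * aux2 ε ∧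
    aux2 (T + ε) + aux2 (T - ε) - 2 * aux2 T - 2 * aux2 ε
      ≤ 2 * (ε ^ 2 * (T + ε) ^ ((1:ℝ)/3) + ε ^ ((2:ℝ) + 1/3)) := by
  constructor
  · rw [aux2_sq (T + ε), aux2_sq (T - ε), aux2_sq T, aux2_sq ε]
    have hconv := (convexOn_rpow (by norm_num : (1:ℝ) ≤ 7/6)).2
      (mem_Ici.mpr (sq_nonneg (T + ε))) (mem_Ici.mpr (sq_nonneg (T - ε)))
      (by norm_num : (0:ℝ) ≤ 1/2) (by norm_num : (0:ℝ) ≤ 1/2) (by norm_num)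
    simp only [smul_eq_mul] at hconv
    rw [show (1:ℝ)/2 * (T + ε) ^ 2 + 1/2 * (T - ε) ^ 2 = T ^ 2 + ε ^ 2 by ring] at hconv
    have hsup := rpow_superadd (sq_nonneg T) (sq_nonneg ε) (by norm_num : (1:ℝ) ≤ 7/6)
    linarith
  · by_cases hle : ε ≤ T
    · rw [aux2_eq_rpow (by positivity : (0:ℝ) ≤ T + ε),
        aux2_eq_rpow (by linarith : (0:ℝ) ≤ T - ε), aux2_eq_rpow hT.le]
      have m1 := mvt_upper (by norm_num : (1:ℝ) ≤ 7/3) hT.le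
        (by linarith : T ≤ T + ε)
      have m2 := mvt_lower (by norm_num : (1:ℝ) ≤ 7/3)
        (by linarith : (0:ℝ) ≤ T - ε) (by linarith : T - ε ≤ T)
      have m3 := mvt_upper (by norm_num : (1:ℝ) ≤ 4/3)
        (by linarith : (0:ℝ) ≤ T - ε) (by linarith : T - ε ≤ T + ε)
      norm_num at m1 m2 m3
      have m3' := mul_le_mul_of_nonneg_left m3 (by positivity : (0:ℝ) ≤ 7/3 * ε)
      have haux := aux2_nonneg hε.le
      have hpow := Real.rpow_nonneg hε.le ((2:ℝ) + 1/3)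
      linarith [m1, m2, m3', haux, hpow]
    · push_neg at hle
      rw [show T - ε = -(ε - T) by ring, aux2_neg,
        aux2_eq_rpow (by positivity : (0:ℝ) ≤ T + ε),
        aux2_eq_rpow (by linarith : (0:ℝ) ≤ ε - T), aux2_eq_rpow hT.le,
        aux2_eq_rpow hε.le, show (2:ℝ) + 1/3 = 7/3 by norm_num]
      have f1 : (ε - T) ^ ((7:ℝ)/3) ≤ ε ^ ((7:ℝ)/3) :=
        Real.rpow_le_rpow (by linarith) (by linarith) (by norm_num)
      have f3 : (T + ε) ^ ((7:ℝ)/3) = (T + ε) ^ 2 * (T + ε) ^ ((1:ℝ)/3) := by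
        rw [show (7:ℝ)/3 = 2 + 1/3 by norm_num,
          Real.rpow_add (by positivity : (0:ℝ) < T + ε), Real.rpow_two]
      have f4 : (T + ε) ^ 2 * (T + ε) ^ ((1:ℝ)/3) ≤ (2 * ε) ^ 2 * (T + ε) ^ ((1:ℝ)/3) := by
        apply mul_le_mul_of_nonneg_right _ (Real.rpow_nonneg (by positivity) _)
        nlinarith
      have f5 : (0:ℝ) ≤ T ^ ((7:ℝ)/3) := Real.rpow_nonneg hT.le _
      have hq : (0:ℝ) ≤ ε ^ 2 * (T + ε) ^ ((1:ℝ)/3) :=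
        mul_nonneg (sq_nonneg ε) (Real.rpow_nonneg (by positivity) _)
      linarith [f1, f3, f4, f5, hq, Real.rpow_nonneg hε.le ((7:ℝ)/3)]

theorem stmt19 (T : ℝ) (hT : 0 < T) :
    Tendsto (fun ε : ℝ => ε ^ (-(4:ℝ)/3) *
        ∫ t in (0:ℝ)..T, ∫ s in (0:ℝ)..T,
          (fbmCovSixth (t + ε) (s + ε) - fbmCovSixth t (s + ε)
            - fbmCovSixth (t + ε) s + fbmCovSixth t s))
      (𝓝[>] 0) (𝓝 0) ∧
    ∀ ε : ℝ, 0 < ε →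
      (0 ≤ ∫ t in (0:ℝ)..T, ∫ s in (0:ℝ)..T,
          (fbmCovSixth (t + ε) (s + ε) - fbmCovSixth t (s + ε)
            - fbmCovSixth (t + ε) s + fbmCovSixth t s)) ∧
      (∫ t in (0:ℝ)..T, ∫ s in (0:ℝ)..T,
          (fbmCovSixth (t + ε) (s + ε) - fbmCovSixth t (s + ε)
            - fbmCovSixth (t + ε) s + fbmCovSixth t s))
        ≤ 2 * (ε ^ 2 * (T + ε) ^ ((1:ℝ)/3) + ε ^ ((2:ℝ) + 1/3)) := by
  have hmain : ∀ ε : ℝ, 0 < ε →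
      (0 ≤ ∫ t in (0:ℝ)..T, ∫ s in (0:ℝ)..T,
          (fbmCovSixth (t + ε) (s + ε) - fbmCovSixth t (s + ε)
            - fbmCovSixth (t + ε) s + fbmCovSixth t s)) ∧
      (∫ t in (0:ℝ)..T, ∫ s in (0:ℝ)..T,
          (fbmCovSixth (t + ε) (s + ε) - fbmCovSixth t (s + ε)
            - fbmCovSixth (t + ε) s + fbmCovSixth t s))
        ≤ 2 * (ε ^ 2 * (T + ε) ^ ((1:ℝ)/3) + ε ^ ((2:ℝ) + 1/3)) := by
    intro ε hε
    rw [double_int T ε]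
    exact main_bounds T ε hT hε
  refine ⟨?_, hmain⟩
  apply squeeze_zero' (g := fun ε : ℝ =>
    2 * (ε ^ ((2:ℝ)/3) * (T + ε) ^ ((1:ℝ)/3) + ε))
  · filter_upwards [self_mem_nhdsWithin] with ε hε
    exact mul_nonneg (Real.rpow_nonneg (le_of_lt hε) _) (hmain ε hε).1
  · filter_upwards [self_mem_nhdsWithin] with ε hε
    have hε' : (0:ℝ) < ε := hε
    have a1 : ε ^ (-(4:ℝ)/3) * ε ^ ((2:ℝ)) = ε ^ ((2:ℝ)/3) := by
      rw [← Real.rpow_add hε']; norm_num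
    have a2 : ε ^ (-(4:ℝ)/3) * ε ^ ((2:ℝ) + 1/3) = ε := by
      rw [← Real.rpow_add hε']; norm_num
    have e : ε ^ (-(4:ℝ)/3) *
        (2 * (ε ^ 2 * (T + ε) ^ ((1:ℝ)/3) + ε ^ ((2:ℝ) + 1/3)))
        = 2 * (ε ^ ((2:ℝ)/3) * (T + ε) ^ ((1:ℝ)/3) + ε) := by
      rw [← Real.rpow_two]
      linear_combination (2 * (T + ε) ^ ((1:ℝ)/3)) * a1 + 2 * a2
    calc ε ^ (-(4:ℝ)/3) * ∫ t in (0:ℝ)..T, ∫ s in (0:ℝ)..T,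
          (fbmCovSixth (t + ε) (s + ε) - fbmCovSixth t (s + ε)
            - fbmCovSixth (t + ε) s + fbmCovSixth t s)
        ≤ ε ^ (-(4:ℝ)/3) *
          (2 * (ε ^ 2 * (T + ε) ^ ((1:ℝ)/3) + ε ^ ((2:ℝ) + 1/3))) :=
          mul_le_mul_of_nonneg_left (hmain ε hε').2 (Real.rpow_nonneg hε'.le _)
      _ = 2 * (ε ^ ((2:ℝ)/3) * (T + ε) ^ ((1:ℝ)/3) + ε) := e
  · have t1 : Tendsto (fun ε : ℝ => ε ^ ((2:ℝ)/3)) (𝓝[>] 0) (𝓝 0) := by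
      have c := (Real.continuousAt_rpow_const 0 ((2:ℝ)/3)
        (Or.inr (by norm_num))).tendsto
      rw [Real.zero_rpow (by norm_num : ((2:ℝ)/3) ≠ 0)] at c
      exact c.mono_left nhdsWithin_le_nhds
    have t2 : Tendsto (fun ε : ℝ => (T + ε) ^ ((1:ℝ)/3)) (𝓝[>] 0)
        (𝓝 (T ^ ((1:ℝ)/3))) := by
      have hc : ContinuousAt (fun ε : ℝ => (T + ε) ^ ((1:ℝ)/3)) 0 := by
        apply ContinuousAt.rpow_const
        · exact (continuous_const.add continuous_id).continuousAt
        · left; simpa using hT.ne'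
      have h2 := hc.tendsto.mono_left (nhdsWithin_le_nhds (s := Ioi (0:ℝ)))
      simpa using h2
    have t3 : Tendsto (fun ε : ℝ => ε) (𝓝[>] 0) (𝓝 0) :=
      (continuous_id.tendsto 0).mono_left nhdsWithin_le_nhds
    have := ((t1.mul t2).add t3).const_mul (2:ℝ)
    simpa using this
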